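/- The number of proper colorings of the complement of the cycle C_{2r+1} using r+1 colors equals (2r² + 3r + 1) · r! for all r ≥ 2. -/

import Mathlib

namespace CardColAux

open Fin.NatCast

lemma no_triangle {m : ℕ} (hm : 4 ≤ m) {x y z : Fin (m+1)}
    (r1 : x = y + 1 ∨ y = x + 1) (r2 : x = z + 1 ∨ z = x + 1) (r3 : y = z + 1 ∨ z = y + 1) :
    False := by
  have hx := x.isLt; have hy := y.isLt; have hz := z.isLt
  simp only [Fin.ext_iff, Fin.val_add_one, Fin.last] at r1 r2 r3
  rcases r1 with r1 | r1 <;> rcases r2 with r2 | r2 <;> rcases r3 with r3 | r3 <;>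
    split_ifs at r1 r2 r3 <;> omega

variable {r : ℕ}

lemma adj_iff (hr : 2 ≤ r) (u v : Fin (2*r+1)) :
    (SimpleGraph.cycleGraph (2*r+1)).Adj u v ↔ u = v + 1 ∨ v = u + 1 := by
  rw [SimpleGraph.cycleGraph_adj']
  have h1 : ((1 : Fin (2*r+1))).val = 1 := by
    rw [Fin.val_one', Nat.mod_eq_of_lt (by omega)]
  constructor
  · rintro (h | h)
    · left
      have h2 : u - v = 1 := Fin.ext (h.trans h1.symm)
      rw [sub_eq_iff_eq_add] at h2; exact h2.trans (add_comm 1 v)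
    · right
      have h2 : v - u = 1 := Fin.ext (h.trans h1.symm)
      rw [sub_eq_iff_eq_add] at h2; exact h2.trans (add_comm 1 u)
  · rintro (h | h)
    · left; rw [h]; simpa using h1
    · right; rw [h]; simpa using h1

lemma dval (v : Fin (2*r+1)) {j : ℕ} (hj : j < 2*r+1) :
    ((v + (j : Fin (2*r+1)) - v)).val = j := by
  rw [add_sub_cancel_left, Fin.val_natCast, Nat.mod_eq_of_lt hj]

lemma psi_inj (v : Fin (2*r+1)) {j k : ℕ} (hj : j < 2*r+1) (hk : k < 2*r+1) :
    v + (j : Fin (2*r+1)) = v + (k : Fin (2*r+1)) ↔ j = k := by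
  constructor
  · intro h
    have := dval v hj
    rw [h, dval v hk] at this; omega
  · rintro rfl; rfl

lemma psi_decomp (v x : Fin (2*r+1)) : v + (((x - v).val : ℕ) : Fin (2*r+1)) = x := by
  rw [Fin.cast_val_eq_self, add_sub_cancel]

lemma psi_succ (v : Fin (2*r+1)) (j : ℕ) :
    v + (j : Fin (2*r+1)) + 1 = v + ((j+1 : ℕ) : Fin (2*r+1)) := by
  rw [Nat.cast_succ, add_assoc]

/-- The coloring determined by the singleton vertex `v` and the color assignment `τ`. -/
def colorMap (r : ℕ) (v : Fin (2*r+1)) (τ : Equiv.Perm (Fin (r+1))) (x : Fin (2*r+1)) :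
    Fin (r+1) :=
  τ ⟨((x - v).val + 1) / 2, by have := (x - v).isLt; omega⟩

lemma colorMap_apply (v : Fin (2*r+1)) (τ : Equiv.Perm (Fin (r+1))) {j : ℕ} (hj : j < 2*r+1) :
    colorMap r v τ (v + (j : Fin (2*r+1))) = τ ⟨(j+1)/2, by omega⟩ := by
  unfold colorMap
  congr 1
  exact Fin.ext (by simp only [dval v hj])

lemma colorMap_proper (hr : 2 ≤ r) (v : Fin (2*r+1)) (τ : Equiv.Perm (Fin (r+1))) :
    ∀ a b, (SimpleGraph.cycleGraph (2*r+1))ᶜ.Adj a b → colorMap r v τ a ≠ colorMap r v τ b := by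
  intro a b hab hcon
  rw [SimpleGraph.compl_adj] at hab
  obtain ⟨hne, hnadj⟩ := hab
  unfold colorMap at hcon
  have hq := τ.injective hcon
  rw [Fin.mk.injEq] at hq
  have hi := (a-v).isLt
  have hj := (b-v).isLt
  have hij : (a-v).val ≠ (b-v).val := fun hcc =>
    hne (by rw [← psi_decomp v a, ← psi_decomp v b, hcc])
  apply hnadj
  rw [adj_iff hr]
  rcases (by omega : (a-v).val = (b-v).val + 1 ∨ (b-v).val = (a-v).val + 1) with hc | hc
  · left
    rw [← psi_decomp v a, ← psi_decomp v b, psi_succ, hc]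
  · right
    rw [← psi_decomp v a, ← psi_decomp v b, psi_succ, hc]

lemma colorMap_eq_v (v : Fin (2*r+1)) (τ : Equiv.Perm (Fin (r+1))) {y : Fin (2*r+1)}
    (h : colorMap r v τ y = colorMap r v τ v) : y = v := by
  unfold colorMap at h
  have hq := τ.injective h
  rw [Fin.mk.injEq, sub_self, Fin.val_zero] at hq
  have h0 : (y - v).val = 0 := by omega
  have h1 : y - v = 0 := Fin.ext (by simpa using h0)
  rwa [sub_eq_zero] at h1

lemma colorMap_pair (hr : 2 ≤ r) (v : Fin (2*r+1)) (τ : Equiv.Perm (Fin (r+1)))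
    (x : Fin (2*r+1)) (hx : x ≠ v) :
    ∃ y, y ≠ x ∧ colorMap r v τ y = colorMap r v τ x := by
  set k := (x - v).val with hk_def
  have hklt : k < 2*r+1 := (x - v).isLt
  have hxk : v + (k : Fin (2*r+1)) = x := psi_decomp v x
  have hk0 : k ≠ 0 := by
    intro h
    apply hx
    have h1 : x - v = 0 := Fin.ext (by rw [Fin.val_zero]; exact h)
    rwa [sub_eq_zero] at h1
  set j := if k % 2 = 1 then k + 1 else k - 1 with hj_def
  have hjlt : j < 2*r+1 := by rw [hj_def]; split_ifs <;> omega
  have hjk : j ≠ k := by rw [hj_def]; split_ifs <;> omega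
  refine ⟨v + (j : Fin (2*r+1)), ?_, ?_⟩
  · intro hcc
    rw [← hxk, psi_inj v hjlt hklt] at hcc
    exact hjk hcc
  · rw [← hxk, colorMap_apply v τ hjlt, colorMap_apply v τ hklt]
    apply congrArg
    apply Fin.ext
    show (j+1)/2 = (k+1)/2
    rw [hj_def]; split_ifs <;> omega

lemma colorMap_injective (hr : 2 ≤ r) :
    Function.Injective (fun p : Fin (2*r+1) × Equiv.Perm (Fin (r+1)) =>
      colorMap r p.1 p.2) := by
  rintro ⟨v, τ⟩ ⟨v', τ'⟩ h
  simp only at h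
  have hvv : v = v' := by
    by_contra hne
    obtain ⟨y, hyx, hye⟩ := colorMap_pair hr v' τ' v hne
    rw [← h] at hye
    exact hyx (colorMap_eq_v v τ hye)
  subst hvv
  have hττ : τ = τ' := by
    apply Equiv.ext
    intro m
    have hm := m.isLt
    have h2m : 2*m.val < 2*r+1 := by omega
    have h2 := congrFun h (v + ((2*m.val : ℕ) : Fin (2*r+1)))
    rw [colorMap_apply v τ h2m, colorMap_apply v τ' h2m] at h2
    have hval : (2*m.val+1)/2 = m.val := by omega
    have hmk : (⟨(2*m.val+1)/2, by omega⟩ : Fin (r+1)) = m := Fin.ext hval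
    rwa [hmk] at h2
  rw [hττ]

lemma exists_rep (hr : 2 ≤ r) (f : Fin (2*r+1) → Fin (r+1))
    (key : ∀ a b : Fin (2*r+1), f a = f b → a = b ∨ a = b + 1 ∨ b = a + 1) :
    ∃ v τ, colorMap r v τ = f := by
  classical
  have three : ∀ x y z : Fin (2*r+1), x ≠ y → x ≠ z → y ≠ z →
      f x = f y → f y = f z → False := by
    intro x y z hxy hxz hyz e1 e2
    exact no_triangle (m := 2*r) (by omega)
      ((key x y e1).resolve_left hxy)
      ((key x z (e1.trans e2)).resolve_left hxz)
      ((key y z e2).resolve_left hyz)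
  set fib : Fin (r+1) → Finset (Fin (2*r+1)) :=
    fun c => Finset.univ.filter (fun x => f x = c) with hfib_def
  have fib_le : ∀ c, (fib c).card ≤ 2 := by
    intro c
    by_contra hc
    push_neg at hc
    obtain ⟨x, y, z, hx, hy, hz, hxy, hxz, hyz⟩ := Finset.two_lt_card_iff.mp hc
    simp only [hfib_def, Finset.mem_filter] at hx hy hz
    exact three x y z hxy hxz hyz (hx.2.trans hy.2.symm) (hy.2.trans hz.2.symm)
  have hsum : ∑ c, (fib c).card = 2*r+1 := by
    have h := Finset.card_eq_sum_card_fiberwise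
      (f := f) (s := (Finset.univ : Finset (Fin (2*r+1)))) (t := Finset.univ)
      (fun x _ => Finset.mem_univ (f x))
    simpa [hfib_def] using h.symm
  set S : Finset (Fin (r+1)) := Finset.univ.filter (fun c => (fib c).card ≤ 1) with hS_def
  have hsplit : ∑ c ∈ S, (fib c).card
      + ∑ c ∈ Finset.univ.filter (fun c => ¬ (fib c).card ≤ 1), (fib c).card = 2*r+1 := by
    rw [hS_def, Finset.sum_filter_add_sum_filter_not]; exact hsum
  have hcardsplit : S.card
      + (Finset.univ.filter (fun c => ¬ (fib c).card ≤ 1)).card = r+1 := by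
    rw [hS_def]
    simpa using Finset.card_filter_add_card_filter_not
      (s := (Finset.univ : Finset (Fin (r+1)))) (p := fun c => (fib c).card ≤ 1)
  have h1 : ∑ c ∈ S, (fib c).card ≤ S.card * 1 := by
    have := Finset.sum_le_card_nsmul S (fun c => (fib c).card) 1 (fun c hc => by
      rw [hS_def] at hc; exact (Finset.mem_filter.mp hc).2)
    simpa [smul_eq_mul] using this
  have h2 : ∑ c ∈ Finset.univ.filter (fun c => ¬ (fib c).card ≤ 1), (fib c).card
      ≤ (Finset.univ.filter (fun c => ¬ (fib c).card ≤ 1)).card * 2 := by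
    have := Finset.sum_le_card_nsmul (Finset.univ.filter (fun c => ¬ (fib c).card ≤ 1))
      (fun c => (fib c).card) 2 (fun c _ => fib_le c)
    simpa [smul_eq_mul] using this
  have hScard : S.card = 1 := by
    have hub : S.card ≤ 1 := by omega
    rcases Nat.lt_or_ge S.card 1 with h | h
    · exfalso
      have hS0 : S = ∅ := Finset.card_eq_zero.mp (by omega)
      have hall : ∀ c : Fin (r+1), 2 ≤ (fib c).card := by
        intro c
        by_contra hcc
        have hmem : c ∈ S := by
          rw [hS_def]; exact Finset.mem_filter.mpr ⟨Finset.mem_univ _, by omega⟩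
        rw [hS0] at hmem
        exact absurd hmem (Finset.notMem_empty c)
      have hlow := Finset.card_nsmul_le_sum Finset.univ (fun c => (fib c).card) 2
        (fun c _ => hall c)
      rw [hsum] at hlow
      simp only [Finset.card_univ, Fintype.card_fin, smul_eq_mul] at hlow
      omega
    · omega
  obtain ⟨c₀, hc₀⟩ := Finset.card_eq_one.mp hScard
  have hfc₀ : (fib c₀).card = 1 := by
    have hle : (fib c₀).card ≤ 1 := by
      have hmem : c₀ ∈ S := hc₀ ▸ Finset.mem_singleton_self c₀
      rw [hS_def] at hmem; exact (Finset.mem_filter.mp hmem).2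
    have hrest : ∑ c ∈ Finset.univ.erase c₀, (fib c).card ≤ r * 2 := by
      have := Finset.sum_le_card_nsmul (Finset.univ.erase c₀)
        (fun c => (fib c).card) 2 (fun c _ => fib_le c)
      have hcard : ((Finset.univ : Finset (Fin (r+1))).erase c₀).card = r := by
        rw [Finset.card_erase_of_mem (Finset.mem_univ _)]
        simp
      rw [hcard, smul_eq_mul] at this
      omega
    have hadd : (fib c₀).card + ∑ c ∈ Finset.univ.erase c₀, (fib c).card = 2*r+1 :=
      (Finset.add_sum_erase _ (fun c => (fib c).card) (Finset.mem_univ c₀)).trans hsum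
    omega
  obtain ⟨v, hv⟩ := Finset.card_eq_one.mp hfc₀
  have hfv : f v = c₀ := by
    have hmem : v ∈ fib c₀ := hv ▸ Finset.mem_singleton_self v
    exact (Finset.mem_filter.mp hmem).2
  have hv1 : ∀ y : Fin (2*r+1), y ≠ v → f y ≠ f v := by
    intro y hy hcon
    have hmem : y ∈ fib c₀ := Finset.mem_filter.mpr ⟨Finset.mem_univ _, hcon.trans hfv⟩
    rw [hv, Finset.mem_singleton] at hmem
    exact hy hmem
  have hv2 : ∀ x : Fin (2*r+1), x ≠ v → ∃ y, y ≠ x ∧ f y = f x := by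
    intro x hx
    have hne : f x ≠ c₀ := by
      intro hcc
      have hmem : x ∈ fib c₀ := Finset.mem_filter.mpr ⟨Finset.mem_univ _, hcc⟩
      rw [hv, Finset.mem_singleton] at hmem
      exact hx hmem
    have hnotS : f x ∉ S := by
      rw [hc₀, Finset.mem_singleton]; exact hne
    have hlt : 1 < (fib (f x)).card := by
      by_contra hcc
      exact hnotS (by rw [hS_def]; exact Finset.mem_filter.mpr ⟨Finset.mem_univ _, by omega⟩)
    obtain ⟨y, hy, hyx⟩ := Finset.exists_mem_ne hlt x
    exact ⟨y, hyx, (Finset.mem_filter.mp hy).2⟩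
  -- pairing along the path
  have H : ∀ m : ℕ, 1 ≤ m → m ≤ r →
      f (v + ((2*m-1 : ℕ) : Fin (2*r+1))) = f (v + ((2*m : ℕ) : Fin (2*r+1))) := by
    intro m
    induction m with
    | zero => omega
    | succ m ih =>
      intro _ hmr
      have e1 : 2*(m+1)-1 = 2*m+1 := by omega
      rw [e1]
      have hxv : v + ((2*m+1 : ℕ) : Fin (2*r+1)) ≠ v := by
        intro hcc
        have h0 : v + ((2*m+1:ℕ) : Fin (2*r+1)) = v + ((0:ℕ) : Fin (2*r+1)) := by
          simpa using hcc
        rw [psi_inj v (by omega) (by omega)] at h0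
        omega
      obtain ⟨y, hyx, hye⟩ := hv2 _ hxv
      rcases (key y _ hye).resolve_left hyx with h | h
      · -- y = x + 1
        have e2 : (2*(m+1) : ℕ) = 2*m+1+1 := by omega
        conv_rhs => rw [e2, ← psi_succ]
        rw [← h]
        exact hye.symm
      · -- x = y + 1, so y = v + (2m)
        have hy' : y = v + ((2*m : ℕ) : Fin (2*r+1)) := by
          have hsucc : y + 1 = v + ((2*m : ℕ) : Fin (2*r+1)) + 1 := by
            rw [psi_succ, ← h]
          exact add_right_cancel hsucc
        rcases Nat.eq_zero_or_pos m with rfl | hm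
        · exfalso
          have hyv : y = v := by simpa using hy'
          rw [hyv] at hye
          exact hv1 _ hxv hye.symm
        · have hih := ih (by omega) (by omega)
          have hchain : f (v + ((2*m-1 : ℕ) : Fin (2*r+1)))
              = f (v + ((2*m+1 : ℕ) : Fin (2*r+1))) := by
            rw [hih, ← hy', hye]
          have hab : v + ((2*m-1 : ℕ) : Fin (2*r+1)) ≠ v + ((2*m+1 : ℕ) : Fin (2*r+1)) := by
            rw [Ne, psi_inj v (by omega) (by omega)]
            omega
          rcases (key _ _ hchain).resolve_left hab with hc | hc
          · exfalso
            rw [psi_succ] at hc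
            rw [psi_inj v (by omega) (by omega)] at hc
            omega
          · exfalso
            rw [psi_succ] at hc
            have e3 : (2*m-1+1 : ℕ) = 2*m := by omega
            rw [e3, psi_inj v (by omega) (by omega)] at hc
            omega
  -- the color assignment
  have hinj : Function.Injective
      (fun m : Fin (r+1) => f (v + ((2*m.val : ℕ) : Fin (2*r+1)))) := by
    intro m m' he
    simp only at he
    by_contra hne
    have hmm' : m.val ≠ m'.val := fun hcc => hne (Fin.ext hcc)
    have hm := m.isLt; have hm' := m'.isLt
    rcases Nat.eq_zero_or_pos m.val with hm0 | hm0
    · apply hv1 (v + ((2*m'.val : ℕ) : Fin (2*r+1)))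
      · intro hcc
        have h0 : v + ((2*m'.val:ℕ) : Fin (2*r+1)) = v + ((0:ℕ) : Fin (2*r+1)) := by
          simpa using hcc
        rw [psi_inj v (by omega) (by omega)] at h0
        omega
      · rw [← he]
        rw [hm0]
        norm_num
    · rcases Nat.eq_zero_or_pos m'.val with hm0' | hm0'
      · apply hv1 (v + ((2*m.val : ℕ) : Fin (2*r+1)))
        · intro hcc
          have h0 : v + ((2*m.val:ℕ) : Fin (2*r+1)) = v + ((0:ℕ) : Fin (2*r+1)) := by
            simpa using hcc
          rw [psi_inj v (by omega) (by omega)] at h0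
          omega
        · rw [he, hm0']
          norm_num
      · -- both ≥ 1 : three distinct elements with same color
        apply three (v + ((2*m.val-1 : ℕ) : Fin (2*r+1)))
          (v + ((2*m.val : ℕ) : Fin (2*r+1))) (v + ((2*m'.val : ℕ) : Fin (2*r+1)))
        · rw [Ne, psi_inj v (by omega) (by omega)]; omega
        · rw [Ne, psi_inj v (by omega) (by omega)]; omega
        · rw [Ne, psi_inj v (by omega) (by omega)]; omega
        · exact H m.val (by omega) (by omega)
        · exact he
  refine ⟨v, Equiv.ofBijective _ ((Fintype.bijective_iff_injective_and_card _).mpr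
    ⟨hinj, rfl⟩), ?_⟩
  funext x
  have hklt : (x - v).val < 2*r+1 := (x - v).isLt
  have hxk : v + (((x - v).val : ℕ) : Fin (2*r+1)) = x := psi_decomp v x
  rw [← hxk, colorMap_apply v _ hklt]
  show f (v + ((2*(((x - v).val+1)/2) : ℕ) : Fin (2*r+1)))
      = f (v + (((x - v).val : ℕ) : Fin (2*r+1)))
  rcases Nat.even_or_odd (x - v).val with he | ho
  · rw [Nat.even_iff] at he
    have e : 2*(((x - v).val+1)/2) = (x - v).val := by omega
    rw [e]
  · rw [Nat.odd_iff] at ho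
    have hm1 : 1 ≤ ((x - v).val+1)/2 := by omega
    have hmr : ((x - v).val+1)/2 ≤ r := by omega
    have hH := H (((x - v).val+1)/2) hm1 hmr
    have e : 2*(((x - v).val+1)/2) - 1 = (x - v).val := by omega
    rw [e] at hH
    exact hH.symm

end CardColAux

/-- The number of proper colorings of the complement of the odd cycle
`C_{2r+1}` using `r+1` colors equals `(2r² + 3r + 1)·r!`, for `r ≥ 2`. -/
theorem card_colorings_compl_oddCycle (r : ℕ) (hr : 2 ≤ r) :
    Nat.card {f : Fin (2 * r + 1) → Fin (r + 1) //
        ∀ a b, (SimpleGraph.cycleGraph (2 * r + 1))ᶜ.Adj a b → f a ≠ f b} =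
      (2 * r ^ 2 + 3 * r + 1) * r.factorial := by
  classical
  have key_of : ∀ f : Fin (2*r+1) → Fin (r+1),
      (∀ a b, (SimpleGraph.cycleGraph (2*r+1))ᶜ.Adj a b → f a ≠ f b) →
      ∀ a b : Fin (2*r+1), f a = f b → a = b ∨ a = b + 1 ∨ b = a + 1 := by
    intro f hf a b he
    by_contra hcon
    push_neg at hcon
    obtain ⟨h1, h2, h3⟩ := hcon
    exact hf a b ((SimpleGraph.compl_adj _ _ _).mpr ⟨h1, by
      rw [CardColAux.adj_iff hr]; tauto⟩) he
  have hGbij : Function.Bijective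
      (fun p : Fin (2*r+1) × Equiv.Perm (Fin (r+1)) =>
        (⟨CardColAux.colorMap r p.1 p.2, CardColAux.colorMap_proper hr p.1 p.2⟩ :
          {f : Fin (2 * r + 1) → Fin (r + 1) //
            ∀ a b, (SimpleGraph.cycleGraph (2 * r + 1))ᶜ.Adj a b → f a ≠ f b})) := by
    constructor
    · intro p q hpq
      exact CardColAux.colorMap_injective hr (congrArg Subtype.val hpq)
    · rintro ⟨f, hf⟩
      obtain ⟨v, τ, hvt⟩ := CardColAux.exists_rep hr f (key_of f hf)
      exact ⟨(v, τ), Subtype.ext hvt⟩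
  rw [← Nat.card_eq_of_bijective _ hGbij]
  have hcard : Nat.card (Fin (2*r+1) × Equiv.Perm (Fin (r+1)))
      = (2*r+1) * Nat.factorial (r+1) := by
    simp [Nat.card_eq_fintype_card, Fintype.card_perm]
  rw [hcard, Nat.factorial_succ]
  ring
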